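/- Let n, k, d be positive integers and ε > 0, ε′ > 0 reals, δ ≥ 2^{−n}, and 0 < δ′ < 0.2. Suppose S is a one-query (ε′,δ′)-steward with randomness complexity m for k adaptively chosen (ε,δ)-concentrated functions f : {0,1}^n → ℝ^d. Then m ≥ (n − 2) + (k−1)·log₂(5/4) − log₂(δ′/δ). -/

import Mathlib

open Classical

/-- Probability of `P` under the uniform distribution on a finite type. -/
noncomputable def pr {α : Type*} [Fintype α] (P : α → Prop) : ℝ :=
  ((Finset.univ.filter P).card : ℝ) / (Fintype.card α : ℝ)

/-- `f : {0,1}^n → ℝ^d` is `(ε,δ)`-concentrated at `μ`. -/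
def Concentrated (n d : ℕ) (ε δ : ℝ)
    (f : (Fin n → Bool) → Fin d → ℝ) (μ : Fin d → ℝ) : Prop :=
  pr (fun X : Fin n → Bool => ∃ j, |f X j - μ j| > ε) ≤ δ

/-- A deterministic owner for `k` rounds of `(ε,δ)`-concentrated functions
`{0,1}^n → ℝ^d`: given the history of responses `Y_1,…,Y_{i-1}`, it produces
a function `f_i` together with a point `μ_i` at which `f_i` is concentrated. -/
structure Owner (n k d : ℕ) (ε δ : ℝ) where
  act : List (Fin d → ℝ) → (((Fin n → Bool) → Fin d → ℝ) × (Fin d → ℝ))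
  conc : ∀ ys : List (Fin d → ℝ), ys.length < k →
    Concentrated n d ε δ (act ys).1 (act ys).2

/-- A one-query steward with randomness complexity `m`: in each round it chooses
a query point from its randomness and the past query answers, and it chooses a
response from its randomness and the past and current query answers. -/
structure Steward (n k d m : ℕ) where
  q : (Fin m → Bool) → List (Fin d → ℝ) → (Fin n → Bool)
  r : (Fin m → Bool) → List (Fin d → ℝ) → (Fin d → ℝ) → (Fin d → ℝ)

/-- The interaction `O ↔ S(Z)` for `i` rounds: the list of triples `(Y_i, W_i, μ_i)`. -/
noncomputable def run {n k d m : ℕ} {ε δ : ℝ} (O : Owner n k d ε δ) (S : Steward n k d m)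
    (Z : Fin m → Bool) : ℕ → List ((Fin d → ℝ) × (Fin d → ℝ) × (Fin d → ℝ))
  | 0 => []
  | i + 1 =>
    let h := run O S Z i
    let fμ := O.act (h.map fun p => p.1)
    let X := S.q Z (h.map fun p => p.2.1)
    let W := fμ.1 X
    h ++ [(S.r Z (h.map fun p => p.2.1) W, W, fμ.2)]

/-- `S` is a one-query `(ε',δ')`-steward for `k` adaptively chosen
`(ε,δ)`-concentrated functions `{0,1}^n → ℝ^d`. -/
def IsSteward (n k d m : ℕ) (ε δ ε' δ' : ℝ) (S : Steward n k d m) : Prop :=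
  ∀ O : Owner n k d ε δ,
    pr (fun Z : Fin m → Bool =>
      ∃ p ∈ run O S Z k, ∃ j : Fin d, |p.1 j - p.2.2 j| > ε') ≤ δ'

namespace SLB

set_option maxHeartbeats 1000000

variable {n k d m : ℕ} {ε ε' δ δ' : ℝ}

lemma card_bool_fun (n : ℕ) : Fintype.card (Fin n → Bool) = 2 ^ n := by
  simp

lemma pr_nonneg {α : Type*} [Fintype α] (P : α → Prop) : 0 ≤ pr P := by
  unfold pr; positivity

/-- Counting through `pr`, for an arbitrary decidability instance. -/
lemma card_pr_eq {α : Type*} [Fintype α] [Nonempty α] (P : α → Prop) (i : DecidablePred P) :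
    ((@Finset.filter α P i Finset.univ).card : ℝ) = pr P * ((Fintype.card α : ℕ) : ℝ) := by
  have he : @Finset.filter α P i Finset.univ =
      @Finset.filter α P (fun a => Classical.propDecidable (P a)) Finset.univ :=
    congrArg (fun j => @Finset.filter α P j Finset.univ) (Subsingleton.elim _ _)
  unfold pr
  have hc0 : ((Fintype.card α : ℕ) : ℝ) ≠ 0 := by
    exact_mod_cast (Fintype.card_pos (α := α)).ne'
  rw [div_mul_cancel₀ _ hc0, he]

/-- If `f` is within `ε` of `μ` outside a set `B` of measure at most `δ`,
then it is `(ε,δ)`-concentrated at `μ`. -/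
lemma conc_helper (hδ0 : 0 ≤ δ) (B : Finset (Fin n → Bool))
    (hcard : (B.card : ℝ) ≤ δ * 2 ^ n)
    (f : (Fin n → Bool) → Fin d → ℝ) (μ : Fin d → ℝ)
    (hf : ∀ x ∉ B, ∀ j, |f x j - μ j| ≤ ε) : Concentrated n d ε δ f μ := by
  unfold Concentrated pr
  rw [card_bool_fun]
  have h2 : (0:ℝ) < (((2:ℕ) ^ n : ℕ) : ℝ) := by positivity
  rw [div_le_iff₀ h2]
  refine le_trans ?_ (le_trans hcard (le_of_eq (by push_cast; ring)))
  refine Nat.cast_le.2 (Finset.card_le_card ?_)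
  intro x hx
  simp only [Finset.mem_filter] at hx
  rcases hx.2 with ⟨j, hj⟩
  by_contra hxB
  exact absurd (hf x hxB j) (not_le.2 hj)

/-- One can choose a point farther than `ε'` from all of finitely many reals. -/
lemma exists_far (C : Finset (Fin m → Bool)) (g : (Fin m → Bool) → ℝ) (ε' : ℝ) :
    ∃ t : ℝ, ∀ Z ∈ C, ε' < |g Z - t| := by
  by_cases hC : C.Nonempty
  · refine ⟨C.sup' hC g + |ε'| + 1, fun Z hZ => ?_⟩
    have h1 : g Z ≤ C.sup' hC g := Finset.le_sup' g hZ
    have h2 : 0 ≤ |ε'| := abs_nonneg _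
    have h3 : ε' ≤ |ε'| := le_abs_self _
    rw [abs_sub_comm, abs_of_nonneg (by linarith)]
    linarith
  · exact ⟨0, fun Z hZ => absurd ⟨Z, hZ⟩ hC⟩

/-- Balanced-split existence: if a set `D` is partitioned into "atoms" each of
size `< N/5` and `|D| > 3N/5`, there is a set `H` of atoms with both sides of
mass at least `N/5`. -/
lemma exists_balanced (N : ℕ) (D : Finset (Fin m → Bool)) (Q : (Fin m → Bool) → (Fin n → Bool))
    (hatom : ∀ x, 5 * (D.filter (fun Z => Q Z = x)).card < N)
    (hD : 3 * N < 5 * D.card) :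
    ∃ H : Finset (Fin n → Bool),
      N ≤ 5 * (D.filter (fun Z => Q Z ∈ H)).card ∧
      N ≤ 5 * (D.filter (fun Z => Q Z ∉ H)).card := by
  rcases Nat.eq_zero_or_pos N with hN | hN
  · exact ⟨∅, by simp [hN], by simp [hN]⟩
  have hPuniv : N ≤ 5 * (D.filter (fun Z => Q Z ∈ (Finset.univ : Finset (Fin n → Bool)))).card := by
    have h : D.filter (fun Z => Q Z ∈ (Finset.univ : Finset (Fin n → Bool))) = D :=
      Finset.filter_true_of_mem (fun Z _ => Finset.mem_univ _)
    rw [h]; omega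
  obtain ⟨H, hH, hmin⟩ := Finset.exists_min_image
    ((Finset.univ : Finset (Finset (Fin n → Bool))).filter
      (fun H => N ≤ 5 * (D.filter (fun Z => Q Z ∈ H)).card)) Finset.card
    ⟨Finset.univ, Finset.mem_filter.2 ⟨Finset.mem_univ _, hPuniv⟩⟩
  have hPH : N ≤ 5 * (D.filter (fun Z => Q Z ∈ H)).card := (Finset.mem_filter.1 hH).2
  have hHne : H.Nonempty := by
    rcases Finset.eq_empty_or_nonempty H with h | h
    · exfalso; rw [h] at hPH; simp at hPH; omega
    · exact h
  obtain ⟨x, hx⟩ := hHne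
  have herase : ¬ (N ≤ 5 * (D.filter (fun Z => Q Z ∈ H.erase x)).card) := by
    intro hcon
    have hmem : H.erase x ∈ ((Finset.univ : Finset (Finset (Fin n → Bool))).filter
        (fun H => N ≤ 5 * (D.filter (fun Z => Q Z ∈ H)).card)) :=
      Finset.mem_filter.2 ⟨Finset.mem_univ _, hcon⟩
    have h1 := hmin _ hmem
    have h2 : (H.erase x).card < H.card := Finset.card_erase_lt_of_mem hx
    omega
  have hsplit : (D.filter (fun Z => Q Z ∈ H)).card ≤
      (D.filter (fun Z => Q Z ∈ H.erase x)).card + (D.filter (fun Z => Q Z = x)).card := by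
    have hsub : D.filter (fun Z => Q Z ∈ H) ⊆
        (D.filter (fun Z => Q Z ∈ H.erase x)) ∪ (D.filter (fun Z => Q Z = x)) := by
      intro Z hZ
      simp only [Finset.mem_filter, Finset.mem_union, Finset.mem_erase] at hZ ⊢
      rcases hZ with ⟨hZD, hZH⟩
      by_cases hqx : Q Z = x
      · exact Or.inr ⟨hZD, hqx⟩
      · exact Or.inl ⟨hZD, hqx, hZH⟩
    exact le_trans (Finset.card_le_card hsub) (Finset.card_union_le _ _)
  have hcompl : (D.filter (fun Z => Q Z ∈ H)).card + (D.filter (fun Z => Q Z ∉ H)).card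
      = D.card := Finset.card_filter_add_card_filter_not (fun Z => Q Z ∈ H)
  have hx5 := hatom x
  exact ⟨H, hPH, by omega⟩

/-- Concentration for functions uniformly within `ε` of `μ`. -/
lemma conc_const_like (hδ0 : 0 ≤ δ) (hδn : 0 ≤ δ * 2 ^ n)
    (f : (Fin n → Bool) → Fin d → ℝ) (μ : Fin d → ℝ)
    (h : ∀ x j, |f x j - μ j| ≤ ε) : Concentrated n d ε δ f μ :=
  conc_helper hδ0 ∅ (by simpa using hδn) f μ (fun x _ j => h x j)

/-- The main split-or-kill move for a non-final round. -/
lemma exists_move (hd : 0 < d) (hε : 0 < ε) (hε' : 0 < ε') (hδ : 1 ≤ δ * 2 ^ n)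
    (C : Finset (Fin m → Bool)) (Q : (Fin m → Bool) → (Fin n → Bool))
    (R : (Fin m → Bool) → (Fin d → ℝ) → (Fin d → ℝ)) :
    ∃ f : (Fin n → Bool) → Fin d → ℝ, ∃ μ : Fin d → ℝ, Concentrated n d ε δ f μ ∧
      (C.card ≤ 5 * (C.filter (fun Z => ∃ j, ε' < |R Z (f (Q Z)) j - μ j|)).card ∨
        ∀ v : Fin d → ℝ, 5 * (C.filter (fun Z => R Z (f (Q Z)) = v)).card ≤ 4 * C.card) := by
  have h2n : (0:ℝ) < 2 ^ n := by positivity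
  have hδ0 : 0 < δ := by nlinarith
  have hδn : (0:ℝ) ≤ δ * 2 ^ n := by linarith
  rcases Nat.eq_zero_or_pos C.card with hN0 | hN0
  · refine ⟨fun _ => fun _ => 0, fun _ => 0, ?_, Or.inr ?_⟩
    · exact conc_const_like (le_of_lt hδ0) hδn _ _ (by intro x j; simp [le_of_lt hε])
    · intro v
      have h1 : (C.filter (fun Z => R Z ((fun _ => fun _ => (0:ℝ)) (Q Z)) = v)).card ≤ C.card :=
        Finset.card_le_card (Finset.filter_subset _ _)
      omega
  obtain ⟨T, hT⟩ := exists_nat_gt (2 * ε' / ε)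
  have hTε : 2 * ε' < (T:ℝ) * ε := by rw [div_lt_iff₀ hε] at hT; linarith
  by_cases hcons : ∀ t : ℕ, t ≤ T → ∃ v : Fin d → ℝ,
      (4 * C.card < 5 * (C.filter (fun Z => R Z (fun _ => (t:ℝ) * ε) = v)).card) ∧
      (∀ j, |v j - (t:ℝ) * ε| ≤ ε')
  · -- every grid point has a large legal consensus; find an adjacent disagreement
    set M : ℕ → (Fin d → ℝ) :=
      fun t => if h : t ≤ T then (hcons t h).choose else fun _ => 0 with hM
    have hMcons : ∀ t, ∀ h : t ≤ T,
        4 * C.card < 5 * (C.filter (fun Z => R Z (fun _ => (t:ℝ) * ε) = M t)).card := by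
      intro t h
      have he : M t = (hcons t h).choose := by rw [hM]; simp [h]
      rw [he]
      exact (hcons t h).choose_spec.1
    have hMleg : ∀ t, ∀ h : t ≤ T, ∀ j, |M t j - (t:ℝ) * ε| ≤ ε' := by
      intro t h
      have he : M t = (hcons t h).choose := by rw [hM]; simp [h]
      rw [he]
      exact (hcons t h).choose_spec.2
    have hne : ∃ t, t < T ∧ M t ≠ M (t + 1) := by
      by_contra hcon
      push_neg at hcon
      have hall : ∀ t, t ≤ T → M t = M 0 := by
        intro t
        induction t with
        | zero => intro _; rfl
        | succ t ih =>
          intro ht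
          rw [← hcon t (by omega)]
          exact ih (by omega)
      have h0 : |M 0 ⟨0, hd⟩ - 0| ≤ ε' := by simpa using hMleg 0 (by omega) ⟨0, hd⟩
      have hT' : |M T ⟨0, hd⟩ - (T:ℝ) * ε| ≤ ε' := hMleg T le_rfl ⟨0, hd⟩
      rw [hall T le_rfl] at hT'
      rcases abs_le.1 h0 with ⟨h0a, h0b⟩
      rcases abs_le.1 hT' with ⟨hTa, hTb⟩
      linarith
    obtain ⟨t, htT, htne⟩ := hne
    have hab : ((t + 1 : ℕ) : ℝ) * ε = (t:ℝ) * ε + ε := by push_cast; ring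
    have hAcard := hMcons t (le_of_lt htT)
    have hBcard := hMcons (t + 1) htT
    set D := (C.filter (fun Z => R Z (fun _ => (t:ℝ) * ε) = M t)) ∩
      (C.filter (fun Z => R Z (fun _ => ((t + 1 : ℕ) : ℝ) * ε) = M (t + 1))) with hD
    have hDsub : D ⊆ C := fun Z hZ => (Finset.mem_filter.1 (Finset.mem_inter.1 hZ).1).1
    have hDresp1 : ∀ Z ∈ D, R Z (fun _ => (t:ℝ) * ε) = M t :=
      fun Z hZ => (Finset.mem_filter.1 (Finset.mem_inter.1 hZ).1).2
    have hDresp2 : ∀ Z ∈ D, R Z (fun _ => ((t + 1 : ℕ) : ℝ) * ε) = M (t + 1) :=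
      fun Z hZ => (Finset.mem_filter.1 (Finset.mem_inter.1 hZ).2).2
    have hDcard : 3 * C.card < 5 * D.card := by
      have hcup : ((C.filter (fun Z => R Z (fun _ => (t:ℝ) * ε) = M t)) ∪
          (C.filter (fun Z => R Z (fun _ => ((t + 1 : ℕ) : ℝ) * ε) = M (t + 1)))).card ≤ C.card := by
        apply Finset.card_le_card
        intro Z hZ
        rcases Finset.mem_union.1 hZ with h | h
        · exact (Finset.mem_filter.1 h).1
        · exact (Finset.mem_filter.1 h).1
      have hiu := Finset.card_inter_add_card_union
        (C.filter (fun Z => R Z (fun _ => (t:ℝ) * ε) = M t))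
        (C.filter (fun Z => R Z (fun _ => ((t + 1 : ℕ) : ℝ) * ε) = M (t + 1)))
      rw [← hD] at hiu
      omega
    by_cases hclump : ∃ x₀, C.card ≤ 5 * (D.filter (fun Z => Q Z = x₀)).card
    · -- a heavy query atom inside D: kill it with a single planted point
      obtain ⟨x₀, hx₀⟩ := hclump
      obtain ⟨tv, htv⟩ := exists_far C (fun Z => R Z (fun _ => 0) ⟨0, hd⟩) ε'
      refine ⟨fun x => if x = x₀ then (fun _ => 0) else (fun _ => tv), fun _ => tv, ?_, Or.inl ?_⟩
      · refine conc_helper (le_of_lt hδ0) {x₀} (by simpa using hδ) _ _ ?_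
        intro x hx j
        rw [if_neg (by simpa using hx)]
        simp [le_of_lt hε]
      · refine le_trans hx₀ ?_
        have hsub : D.filter (fun Z => Q Z = x₀) ⊆ C.filter (fun Z => ∃ j,
            ε' < |R Z ((fun x => if x = x₀ then (fun _ => (0:ℝ)) else fun _ => tv) (Q Z)) j
              - (fun _ => tv) j|) := by
          intro Z hZ
          rw [Finset.mem_filter] at hZ ⊢
          obtain ⟨hZD, hZx⟩ := hZ
          refine ⟨hDsub hZD, ⟨⟨0, hd⟩, ?_⟩⟩
          simpa [hZx] using htv Z (hDsub hZD)
        have := Finset.card_le_card hsub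
        omega
    · -- spread atoms: balanced split probe
      push_neg at hclump
      obtain ⟨H, hH1, hH2⟩ := exists_balanced C.card D Q (fun x => hclump x) hDcard
      refine ⟨fun x => if x ∈ H then (fun _ => (t:ℝ) * ε) else (fun _ => ((t + 1 : ℕ) : ℝ) * ε),
        fun _ => (t:ℝ) * ε + ε / 2, ?_, Or.inr ?_⟩
      · refine conc_const_like (le_of_lt hδ0) hδn _ _ ?_
        intro x j
        by_cases hxH : x ∈ H
        · rw [if_pos hxH]
          have he : ((fun _ => (t:ℝ) * ε) j : ℝ) - ((t:ℝ) * ε + ε / 2) = -(ε / 2) := by ring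
          rw [he, abs_neg, abs_of_nonneg (by linarith)]
          linarith
        · rw [if_neg hxH]
          have he : ((fun _ => ((t + 1 : ℕ) : ℝ) * ε) j : ℝ) - ((t:ℝ) * ε + ε / 2) = ε / 2 := by
            rw [show ((fun _ => ((t + 1 : ℕ) : ℝ) * ε) j : ℝ) = ((t + 1 : ℕ) : ℝ) * ε from rfl,
              hab]; ring
          rw [he, abs_of_nonneg (by linarith)]
          linarith
      · intro v
        have hvne : v ≠ M t ∨ v ≠ M (t + 1) := by
          by_contra hcon
          push_neg at hcon
          exact htne (by rw [← hcon.1, ← hcon.2])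
        rcases hvne with hv | hv
        · -- the H-side of D answers M t ≠ v
          have hsub : C.filter (fun Z => R Z ((fun x => if x ∈ H then (fun _ => (t:ℝ) * ε)
              else (fun _ => ((t + 1 : ℕ) : ℝ) * ε)) (Q Z)) = v) ⊆
              C \ (D.filter (fun Z => Q Z ∈ H)) := by
            intro Z hZ
            rw [Finset.mem_filter] at hZ
            obtain ⟨hZC, hresp⟩ := hZ
            rw [Finset.mem_sdiff]
            refine ⟨hZC, ?_⟩
            intro hZd
            rw [Finset.mem_filter] at hZd
            obtain ⟨hZD, hQH⟩ := hZd
            have he : ((fun x : Fin n → Bool => if x ∈ H then (fun _ : Fin d => (t:ℝ) * ε)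
                else (fun _ : Fin d => ((t + 1 : ℕ) : ℝ) * ε)) (Q Z))
                = (fun _ : Fin d => (t:ℝ) * ε) := by
              simp [hQH]
            rw [he, hDresp1 Z hZD] at hresp
            exact hv hresp.symm
          have h1 := Finset.card_le_card hsub
          have h2 : (C \ (D.filter (fun Z => Q Z ∈ H))).card =
              C.card - (D.filter (fun Z => Q Z ∈ H)).card := by
            apply Finset.card_sdiff_of_subset
            intro Z hZ
            exact hDsub (Finset.mem_of_mem_filter _ hZ)
          have h3 : (D.filter (fun Z => Q Z ∈ H)).card ≤ C.card :=
            Finset.card_le_card (fun Z hZ => hDsub (Finset.mem_of_mem_filter _ hZ))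
          omega
        · -- the other side of D answers M (t+1) ≠ v
          have hsub : C.filter (fun Z => R Z ((fun x => if x ∈ H then (fun _ => (t:ℝ) * ε)
              else (fun _ => ((t + 1 : ℕ) : ℝ) * ε)) (Q Z)) = v) ⊆
              C \ (D.filter (fun Z => Q Z ∉ H)) := by
            intro Z hZ
            rw [Finset.mem_filter] at hZ
            obtain ⟨hZC, hresp⟩ := hZ
            rw [Finset.mem_sdiff]
            refine ⟨hZC, ?_⟩
            intro hZd
            rw [Finset.mem_filter] at hZd
            obtain ⟨hZD, hQH⟩ := hZd
            have he : ((fun x : Fin n → Bool => if x ∈ H then (fun _ : Fin d => (t:ℝ) * ε)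
                else (fun _ : Fin d => ((t + 1 : ℕ) : ℝ) * ε)) (Q Z))
                = (fun _ : Fin d => ((t + 1 : ℕ) : ℝ) * ε) := by
              simp [hQH]
            rw [he, hDresp2 Z hZD] at hresp
            exact hv hresp.symm
          have h1 := Finset.card_le_card hsub
          have h2 : (C \ (D.filter (fun Z => Q Z ∉ H))).card =
              C.card - (D.filter (fun Z => Q Z ∉ H)).card := by
            apply Finset.card_sdiff_of_subset
            intro Z hZ
            exact hDsub (Finset.mem_of_mem_filter _ hZ)
          have h3 : (D.filter (fun Z => Q Z ∉ H)).card ≤ C.card :=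
            Finset.card_le_card (fun Z hZ => hDsub (Finset.mem_of_mem_filter _ hZ))
          omega
  · -- some grid point lacks a large legal consensus
    push_neg at hcons
    obtain ⟨t, htT, hbad⟩ := hcons
    by_cases hbig : ∃ v : Fin d → ℝ,
        4 * C.card < 5 * (C.filter (fun Z => R Z (fun _ => (t:ℝ) * ε) = v)).card
    · -- large but illegal consensus: kill it with a constant function
      obtain ⟨v, hvcard⟩ := hbig
      obtain ⟨j₀, hj₀⟩ := hbad v hvcard
      refine ⟨fun _ => fun _ => (t:ℝ) * ε, fun _ => (t:ℝ) * ε, ?_, Or.inl ?_⟩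
      · exact conc_const_like (le_of_lt hδ0) hδn _ _ (by intro x j; simp [le_of_lt hε])
      · have hsub : C.filter (fun Z => R Z (fun _ => (t:ℝ) * ε) = v) ⊆
            C.filter (fun Z => ∃ j, ε' < |R Z ((fun _ => fun _ => (t:ℝ) * ε) (Q Z)) j
              - (fun _ => (t:ℝ) * ε) j|) := by
          intro Z hZ
          rw [Finset.mem_filter] at hZ ⊢
          obtain ⟨hZC, hresp⟩ := hZ
          refine ⟨hZC, ⟨j₀, ?_⟩⟩
          show ε' < |R Z (fun _ => (t:ℝ) * ε) j₀ - (t:ℝ) * ε|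
          rw [hresp]
          exact hj₀
        have := Finset.card_le_card hsub
        omega
    · -- no large consensus at all: a constant probe splits
      push_neg at hbig
      refine ⟨fun _ => fun _ => (t:ℝ) * ε, fun _ => (t:ℝ) * ε, ?_, Or.inr ?_⟩
      · exact conc_const_like (le_of_lt hδ0) hδn _ _ (by intro x j; simp [le_of_lt hε])
      · intro v
        exact hbig v

/-- The final-round killing move. -/
lemma exists_kill (hd : 0 < d) (hε : 0 < ε) (hε' : 0 < ε') (hδ : 1 ≤ δ * 2 ^ n)
    (C : Finset (Fin m → Bool)) (Q : (Fin m → Bool) → (Fin n → Bool))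
    (R : (Fin m → Bool) → (Fin d → ℝ) → (Fin d → ℝ)) :
    ∃ f : (Fin n → Bool) → Fin d → ℝ, ∃ μ : Fin d → ℝ, Concentrated n d ε δ f μ ∧
      min C.card ⌊δ * 2 ^ n⌋₊ ≤ (C.filter (fun Z => ∃ j, ε' < |R Z (f (Q Z)) j - μ j|)).card := by
  have h2n : (0:ℝ) < 2 ^ n := by positivity
  have hδ0 : 0 < δ := by nlinarith
  have hs0' : ((⌊δ * 2 ^ n⌋₊ : ℕ) : ℝ) ≤ δ * 2 ^ n := Nat.floor_le (by positivity)
  obtain ⟨B, hBcard, hBprop⟩ : ∃ B : Finset (Fin n → Bool), B.card ≤ ⌊δ * 2 ^ n⌋₊ ∧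
      min C.card ⌊δ * 2 ^ n⌋₊ ≤ (C.filter (fun Z => Q Z ∈ B)).card := by
    by_cases hI : (C.image Q).card ≤ ⌊δ * 2 ^ n⌋₊
    · refine ⟨C.image Q, hI, ?_⟩
      have h : C.filter (fun Z => Q Z ∈ C.image Q) = C :=
        Finset.filter_true_of_mem (fun Z hZ => Finset.mem_image_of_mem _ hZ)
      rw [h]
      exact min_le_left _ _
    · push_neg at hI
      obtain ⟨B, hBsub, hBcard⟩ := Finset.exists_subset_card_eq (s := C.image Q) (n := ⌊δ * 2 ^ n⌋₊)
        (le_of_lt hI)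
      refine ⟨B, le_of_eq hBcard, ?_⟩
      have hBsub2 : B ⊆ (C.filter (fun Z => Q Z ∈ B)).image Q := by
        intro x hxB
        have hxI : x ∈ C.image Q := hBsub hxB
        rw [Finset.mem_image] at hxI
        obtain ⟨Z, hZC, hQZ⟩ := hxI
        rw [Finset.mem_image]
        exact ⟨Z, Finset.mem_filter.2 ⟨hZC, by rw [hQZ]; exact hxB⟩, hQZ⟩
      refine le_trans (min_le_right _ _) ?_
      calc ⌊δ * 2 ^ n⌋₊ = B.card := hBcard.symm
        _ ≤ ((C.filter (fun Z => Q Z ∈ B)).image Q).card := Finset.card_le_card hBsub2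
        _ ≤ (C.filter (fun Z => Q Z ∈ B)).card := Finset.card_image_le
  obtain ⟨tv, htv⟩ := exists_far C (fun Z => R Z (fun _ => 0) ⟨0, hd⟩) ε'
  refine ⟨fun x => if x ∈ B then (fun _ => 0) else (fun _ => tv), fun _ => tv, ?_, ?_⟩
  · refine conc_helper (le_of_lt hδ0) B (le_trans (Nat.cast_le.2 hBcard) hs0') _ _ ?_
    intro x hx j
    rw [if_neg hx]
    simp [le_of_lt hε]
  · refine le_trans hBprop (Finset.card_le_card ?_)
    intro Z hZ
    rw [Finset.mem_filter] at hZ ⊢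
    refine ⟨hZ.1, ⟨⟨0, hd⟩, ?_⟩⟩
    simpa [hZ.2] using htv Z hZ.1

variable (S : Steward n k d m)

section owner

variable (hd : 0 < d) (hε : 0 < ε) (hε' : 0 < ε') (hδ : 1 ≤ δ * 2 ^ n)

/-- The owner's move given the current class `C`, the per-seed query-answer
histories `wh`, and the number `j` of remaining rounds. -/
noncomputable def pick (C : Finset (Fin m → Bool))
    (wh : (Fin m → Bool) → List (Fin d → ℝ)) (j : ℕ) :
    ((Fin n → Bool) → Fin d → ℝ) × (Fin d → ℝ) :=
  if j = 1 then
    let h := exists_kill (ε := ε) (ε' := ε') hd hε hε' hδ C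
      (fun Z => S.q Z (wh Z)) (fun Z w => S.r Z (wh Z) w)
    (h.choose, h.choose_spec.choose)
  else
    let h := exists_move (ε := ε) (ε' := ε') hd hε hε' hδ C
      (fun Z => S.q Z (wh Z)) (fun Z w => S.r Z (wh Z) w)
    (h.choose, h.choose_spec.choose)

lemma pick_conc (C : Finset (Fin m → Bool)) (wh : (Fin m → Bool) → List (Fin d → ℝ)) (j : ℕ) :
    Concentrated n d ε δ (pick S hd hε hε' hδ C wh j).1 (pick S hd hε hε' hδ C wh j).2 := by
  unfold pick
  by_cases h1 : j = 1
  · simp only [h1, if_pos rfl]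
    exact (exists_kill hd hε hε' hδ C _ _).choose_spec.choose_spec.1
  · simp only [if_neg h1]
    exact (exists_move hd hε hε' hδ C _ _).choose_spec.choose_spec.1

lemma pick_kill (C : Finset (Fin m → Bool)) (wh : (Fin m → Bool) → List (Fin d → ℝ)) :
    min C.card ⌊δ * 2 ^ n⌋₊ ≤ (C.filter (fun Z => ∃ j,
      ε' < |S.r Z (wh Z) ((pick S hd hε hε' hδ C wh 1).1 (S.q Z (wh Z))) j
        - (pick S hd hε hε' hδ C wh 1).2 j|)).card := by
  unfold pick
  simp only [if_pos rfl]
  exact (exists_kill hd hε hε' hδ C _ _).choose_spec.choose_spec.2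

lemma pick_main (C : Finset (Fin m → Bool)) (wh : (Fin m → Bool) → List (Fin d → ℝ))
    {j : ℕ} (hj : j ≠ 1) :
    C.card ≤ 5 * (C.filter (fun Z => ∃ jj,
        ε' < |S.r Z (wh Z) ((pick S hd hε hε' hδ C wh j).1 (S.q Z (wh Z))) jj
          - (pick S hd hε hε' hδ C wh j).2 jj|)).card ∨
      ∀ v : Fin d → ℝ, 5 * (C.filter (fun Z =>
        S.r Z (wh Z) ((pick S hd hε hε' hδ C wh j).1 (S.q Z (wh Z))) = v)).card ≤ 4 * C.card := by
  unfold pick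
  simp only [if_neg hj]
  exact (exists_move hd hε hε' hδ C _ _).choose_spec.choose_spec.2

/-- The simulation data: for a reversed response-history `t`, the class of
seeds consistent with `t`, and the query-answer history of every seed. -/
noncomputable def data : List (Fin d → ℝ) →
    Finset (Fin m → Bool) × ((Fin m → Bool) → List (Fin d → ℝ))
  | [] => (Finset.univ, fun _ => [])
  | y :: t =>
    let p := data t
    let mv := pick S hd hε hε' hδ p.1 p.2 (k - t.length)
    (p.1.filter (fun Z => S.r Z (p.2 Z) (mv.1 (S.q Z (p.2 Z))) = y),
     fun Z => p.2 Z ++ [mv.1 (S.q Z (p.2 Z))])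

/-- The adversarial owner. -/
noncomputable def myOwner : Owner n k d ε δ where
  act ys := pick S hd hε hε' hδ (data S hd hε hε' hδ (k := k) ys.reverse).1
      (data S hd hε hε' hδ (k := k) ys.reverse).2 (k - ys.length)
  conc ys _ := pick_conc S hd hε hε' hδ _ _ _

end owner

section analysis

variable (hd : 0 < d) (hε : 0 < ε) (hε' : 0 < ε') (hδ : 1 ≤ δ * 2 ^ n)

/-- The class of seeds consistent with reversed response-history `t`. -/
noncomputable def cls (t : List (Fin d → ℝ)) : Finset (Fin m → Bool) :=
  (data S hd hε hε' hδ (k := k) t).1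

/-- The query-answer histories at reversed response-history `t`. -/
noncomputable def whs (t : List (Fin d → ℝ)) : (Fin m → Bool) → List (Fin d → ℝ) :=
  (data S hd hε hε' hδ (k := k) t).2

/-- The owner's move at reversed response-history `t`. -/
noncomputable def mv (t : List (Fin d → ℝ)) : ((Fin n → Bool) → Fin d → ℝ) × (Fin d → ℝ) :=
  pick S hd hε hε' hδ (cls S hd hε hε' hδ t) (whs S hd hε hε' hδ t) (k - t.length)

/-- The response of seed `Z` at reversed history `t`. -/
noncomputable def rsp (t : List (Fin d → ℝ)) (Z : Fin m → Bool) : Fin d → ℝ :=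
  S.r Z (whs S hd hε hε' hδ (k := k) t Z)
    ((mv S hd hε hε' hδ t).1 (S.q Z (whs S hd hε hε' hδ (k := k) t Z)))

lemma cls_nil : cls S hd hε hε' hδ (k := k) ([] : List (Fin d → ℝ)) = Finset.univ := rfl

lemma whs_nil : whs S hd hε hε' hδ (k := k) ([] : List (Fin d → ℝ)) = fun _ => [] := rfl

lemma cls_cons (y : Fin d → ℝ) (t : List (Fin d → ℝ)) :
    cls S hd hε hε' hδ (k := k) (y :: t) =
      (cls S hd hε hε' hδ t).filter (fun Z => rsp S hd hε hε' hδ t Z = y) := rfl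

lemma whs_cons (y : Fin d → ℝ) (t : List (Fin d → ℝ)) :
    whs S hd hε hε' hδ (k := k) (y :: t) =
      fun Z => whs S hd hε hε' hδ t Z ++
        [(mv S hd hε hε' hδ t).1 (S.q Z (whs S hd hε hε' hδ t Z))] := rfl

lemma act_rev (t : List (Fin d → ℝ)) :
    (myOwner S hd hε hε' hδ (k := k)).act t.reverse = mv S hd hε hε' hδ t := by
  simp only [myOwner, mv, cls, whs, List.reverse_reverse, List.length_reverse]

lemma run_length {O : Owner n k d ε δ} (Z : Fin m → Bool) :
    ∀ i, (run O S Z i).length = i := by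
  intro i
  induction i with
  | zero => rfl
  | succ i ih => simp [run, ih]

lemma run_prefix {O : Owner n k d ε δ} (Z : Fin m → Bool) {i i' : ℕ} (h : i ≤ i') :
    ∃ u, run O S Z i' = run O S Z i ++ u := by
  induction i' with
  | zero => exact ⟨[], by simp [Nat.le_zero.1 h]⟩
  | succ i' ih =>
    rcases Nat.lt_or_ge i (i'+1) with hlt | hge
    · rcases ih (Nat.lt_succ_iff.1 hlt) with ⟨u, hu⟩
      have h2 : ∃ e, run O S Z (i'+1) = run O S Z i' ++ [e] := ⟨_, rfl⟩
      rcases h2 with ⟨e, he⟩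
      exact ⟨u ++ [e], by rw [he, hu, List.append_assoc]⟩
    · have : i = i' + 1 := le_antisymm h hge
      exact ⟨[], by simp [this]⟩

/-- Seeds in the class of `t` have interacted according to `t`. -/
lemma cls_hist : ∀ (t : List (Fin d → ℝ)), ∀ Z ∈ cls S hd hε hε' hδ (k := k) t,
    ((run (myOwner S hd hε hε' hδ) S Z t.length).map (fun p => p.1)).reverse = t ∧
    (run (myOwner S hd hε hε' hδ) S Z t.length).map (fun p => p.2.1)
      = whs S hd hε hε' hδ t Z := by
  intro t
  induction t with
  | nil => intro Z _; exact ⟨rfl, rfl⟩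
  | cons y t ih =>
    intro Z hZ
    rw [cls_cons, Finset.mem_filter] at hZ
    obtain ⟨hZt, hy⟩ := hZ
    obtain ⟨ih1, ih2⟩ := ih Z hZt
    have hmap : (run (myOwner S hd hε hε' hδ) S Z t.length).map (fun p => p.1) = t.reverse := by
      have h := congrArg List.reverse ih1
      rwa [List.reverse_reverse] at h
    have hstep : run (myOwner S hd hε hε' hδ) S Z (t.length + 1) =
        run (myOwner S hd hε hε' hδ) S Z t.length ++
          [(rsp S hd hε hε' hδ t Z,
            (mv S hd hε hε' hδ t).1 (S.q Z (whs S hd hε hε' hδ t Z)),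
            (mv S hd hε hε' hδ t).2)] := by
      show (run (myOwner S hd hε hε' hδ) S Z t.length) ++ _ = _
      rw [hmap, ih2, act_rev]; rfl
    refine ⟨?_, ?_⟩
    · show ((run (myOwner S hd hε hε' hδ) S Z (t.length + 1)).map (fun p => p.1)).reverse
        = y :: t
      rw [hstep, List.map_append, List.reverse_append, hmap]
      simp [hy]
    · show (run (myOwner S hd hε hε' hδ) S Z (t.length + 1)).map (fun p => p.2.1)
        = whs S hd hε hε' hδ (y :: t) Z
      rw [hstep, List.map_append, ih2, whs_cons]; rfl

/-- The interaction at round `t.length + 1` for a seed in the class of `t`. -/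
lemma run_step (t : List (Fin d → ℝ)) (Z : Fin m → Bool) (hZ : Z ∈ cls S hd hε hε' hδ (k := k) t) :
    run (myOwner S hd hε hε' hδ) S Z (t.length + 1) =
      run (myOwner S hd hε hε' hδ) S Z t.length ++
        [(rsp S hd hε hε' hδ t Z,
          (mv S hd hε hε' hδ t).1 (S.q Z (whs S hd hε hε' hδ t Z)),
          (mv S hd hε hε' hδ t).2)] := by
  obtain ⟨ih1, ih2⟩ := cls_hist S hd hε hε' hδ t Z hZ
  have hmap : (run (myOwner S hd hε hε' hδ) S Z t.length).map (fun p => p.1) = t.reverse := by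
    have h := congrArg List.reverse ih1
    rwa [List.reverse_reverse] at h
  show (run (myOwner S hd hε hε' hδ) S Z t.length) ++ _ = _
  rw [hmap, ih2, act_rev]; rfl

/-- The round-`t.length+1` entry appears in the tail of the full interaction. -/
lemma entry_mem (t : List (Fin d → ℝ)) (Z : Fin m → Bool)
    (hZ : Z ∈ cls S hd hε hε' hδ (k := k) t) (hlt : t.length < k) :
    (rsp S hd hε hε' hδ t Z,
      (mv S hd hε hε' hδ t).1 (S.q Z (whs S hd hε hε' hδ t Z)),
      (mv S hd hε hε' hδ t).2) ∈
      (run (myOwner S hd hε hε' hδ) S Z k).drop t.length := by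
  have hstep := run_step S hd hε hε' hδ t Z hZ
  obtain ⟨u, hu⟩ := run_prefix S (O := myOwner S hd hε hε' hδ) Z (Nat.succ_le_of_lt hlt)
  have hlen : (run (myOwner S hd hε hε' hδ) S Z t.length).length = t.length :=
    run_length S Z t.length
  have hdl : ∀ (l₁ l₂ : List ((Fin d → ℝ) × (Fin d → ℝ) × (Fin d → ℝ))),
      l₁.length = t.length → (l₁ ++ l₂).drop t.length = l₂ := by
    intro l₁ l₂ h; rw [← h, List.drop_left]
  rw [hu, hstep, List.append_assoc, hdl _ _ hlen]
  simp

end analysis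

section reals

/-- Superadditivity of `min (·/5) S` over a sum. -/
lemma sum_min_ge {ι : Type*} (T : Finset ι) (a : ι → ℝ) (Sv : ℝ) (hS : 0 ≤ Sv)
    (ha : ∀ v ∈ T, 0 ≤ a v) :
    min ((∑ v ∈ T, a v) / 5) Sv ≤ ∑ v ∈ T, min (a v / 5) Sv := by
  by_cases h : ∃ v ∈ T, Sv ≤ a v / 5
  · rcases h with ⟨v₀, hv₀, hv⟩
    have h2 : min (a v₀ / 5) Sv ≤ ∑ v ∈ T, min (a v / 5) Sv :=
      Finset.single_le_sum (f := fun v => min (a v / 5) Sv)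
        (fun v hv => le_min (by linarith [ha v hv]) hS) hv₀
    exact le_trans (min_le_right _ _)
      (le_trans (le_of_eq (min_eq_right hv).symm) h2)
  · push_neg at h
    have h1 : ∑ v ∈ T, min (a v / 5) Sv = (∑ v ∈ T, a v) / 5 := by
      rw [Finset.sum_div]
      exact Finset.sum_congr rfl (fun v hv => min_eq_left (le_of_lt (h v hv)))
    rw [h1]
    exact min_le_left _ _

/-- The key potential-combination step. -/
lemma combine {ι : Type*} (T : Finset ι) (Nv Ev : ι → ℝ) (N E Sv : ℝ)
    (hS : 0 ≤ Sv) (hN0 : 0 ≤ N)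
    (hNv : ∀ v ∈ T, 0 ≤ Nv v) (hEv0 : ∀ v ∈ T, 0 ≤ Ev v)
    (hsum : ∑ v ∈ T, Nv v = N) (hE : ∑ v ∈ T, Ev v ≤ E)
    (hcell : ∀ v ∈ T, 5 * Nv v ≤ 4 * N)
    (hIH : ∀ v ∈ T, min (Nv v / 5) Sv ≤ Ev v) :
    min (N / 5) (5 / 4 * Sv) ≤ E := by
  by_cases hbig : ∃ v₀ ∈ T, Sv < Nv v₀ / 5
  · obtain ⟨v₀, hv₀T, hv₀⟩ := hbig
    have hNsplit : Nv v₀ + ∑ v ∈ T.erase v₀, Nv v = N := by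
      rw [Finset.add_sum_erase T Nv hv₀T]; exact hsum
    have hEsplit : Ev v₀ + ∑ v ∈ T.erase v₀, Ev v = ∑ v ∈ T, Ev v :=
      Finset.add_sum_erase T Ev hv₀T
    have h1 : Sv ≤ Ev v₀ := by
      have h := hIH v₀ hv₀T
      rwa [min_eq_right (le_of_lt hv₀)] at h
    have h2 : min ((∑ v ∈ T.erase v₀, Nv v) / 5) Sv ≤ ∑ v ∈ T.erase v₀, Ev v := by
      refine le_trans (sum_min_ge _ _ _ hS (fun v hv => hNv v (Finset.mem_of_mem_erase hv))) ?_
      exact Finset.sum_le_sum (fun v hv => hIH v (Finset.mem_of_mem_erase hv))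
    have hrest_ge : N / 5 ≤ ∑ v ∈ T.erase v₀, Nv v := by
      have := hcell v₀ hv₀T; linarith
    have h3 : min (N / 25) Sv ≤ ∑ v ∈ T.erase v₀, Ev v := by
      refine le_trans (min_le_min (by linarith) le_rfl) h2
    have hEtot : Sv + min (N / 25) Sv ≤ E := by
      have hEsum : Ev v₀ + ∑ v ∈ T.erase v₀, Ev v ≤ E := by rw [hEsplit]; exact hE
      linarith
    have hNbig : 5 * Sv < Nv v₀ := by linarith
    have hNN : 5 * Sv < N := by
      have : Nv v₀ ≤ N := by
        have := Finset.sum_le_sum_of_subset_of_nonneg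
          (Finset.singleton_subset_iff.2 hv₀T) (fun v hv _ => hNv v hv)
        simpa [hsum] using this
      linarith
    by_cases h25 : Sv ≤ N / 25
    · rw [min_eq_right h25] at hEtot
      exact le_trans (min_le_right _ _) (by linarith)
    · push_neg at h25
      rw [min_eq_left (le_of_lt h25)] at hEtot
      by_cases h4 : Sv / 4 ≤ N / 25
      · exact le_trans (min_le_right _ _) (by linarith)
      · push_neg at h4
        exact le_trans (min_le_left _ _) (by linarith)
  · push_neg at hbig
    have h1 : ∑ v ∈ T, Nv v / 5 ≤ ∑ v ∈ T, Ev v :=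
      Finset.sum_le_sum (fun v hv => by
        have h := hIH v hv; rwa [min_eq_left (hbig v hv)] at h)
    refine le_trans (min_le_left _ _) ?_
    calc N / 5 = (∑ v ∈ T, Nv v) / 5 := by rw [hsum]
      _ = ∑ v ∈ T, Nv v / 5 := Finset.sum_div _ _ _
      _ ≤ ∑ v ∈ T, Ev v := h1
      _ ≤ E := hE

end reals

section main

variable (hd : 0 < d) (hε : 0 < ε) (hε' : 0 < ε') (hδ : 1 ≤ δ * 2 ^ n)

/-- Seeds erring in the current round err in the tail of the interaction. -/
lemma err_sub (t : List (Fin d → ℝ)) (hlt : t.length < k) :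
    (cls S hd hε hε' hδ (k := k) t).filter (fun Z => ∃ jj,
        ε' < |S.r Z (whs S hd hε hε' hδ t Z)
            ((pick S hd hε hε' hδ (cls S hd hε hε' hδ t) (whs S hd hε hε' hδ t)
              (k - t.length)).1 (S.q Z (whs S hd hε hε' hδ t Z))) jj
          - (pick S hd hε hε' hδ (cls S hd hε hε' hδ t) (whs S hd hε hε' hδ t)
              (k - t.length)).2 jj|) ⊆
      (cls S hd hε hε' hδ t).filter (fun Z =>
        ∃ p ∈ (run (myOwner S hd hε hε' hδ) S Z k).drop t.length,
          ∃ jj : Fin d, |p.1 jj - p.2.2 jj| > ε') := by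
  intro Z hZ
  rw [Finset.mem_filter] at hZ ⊢
  obtain ⟨hZc, jj, hjj⟩ := hZ
  exact ⟨hZc, ⟨_, entry_mem S hd hε hε' hδ t Z hZc hlt, jj, hjj⟩⟩

/-- The grand induction: forced error mass below a class. -/
lemma grand : ∀ j : ℕ, 1 ≤ j → ∀ t : List (Fin d → ℝ), t.length + j = k →
    min (((cls S hd hε hε' hδ (k := k) t).card : ℝ) / 5)
        ((⌊δ * 2 ^ n⌋₊ : ℝ) * (5 / 4) ^ (j - 1)) ≤
      (((cls S hd hε hε' hδ (k := k) t).filter (fun Z =>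
        ∃ p ∈ (run (myOwner S hd hε hε' hδ) S Z k).drop t.length,
          ∃ jj : Fin d, |p.1 jj - p.2.2 jj| > ε')).card : ℝ) := by
  intro j hj
  induction j, hj using Nat.le_induction with
  | base =>
    intro t ht
    have hk1 : k - t.length = 1 := by omega
    have hlt : t.length < k := by omega
    have hkill := pick_kill S hd hε hε' hδ (cls S hd hε hε' hδ t) (whs S hd hε hε' hδ t)
    have hcount := Finset.card_le_card (err_sub S hd hε hε' hδ t hlt)
    rw [hk1] at hcount
    have hmin := le_trans hkill hcount
    have hreal := (Nat.cast_le (α := ℝ)).2 hmin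
    push_cast at hreal
    refine le_trans ?_ hreal
    have h0 : (0:ℝ) ≤ ((cls S hd hε hε' hδ (k := k) t).card : ℝ) := by positivity
    have hpw : ((5:ℝ)/4) ^ (1 - 1) = 1 := by norm_num
    rw [hpw, mul_one]
    exact min_le_min (by linarith) le_rfl
  | succ j hj ih =>
    intro t ht
    have hne1 : k - t.length ≠ 1 := by omega
    have hlt : t.length < k := by omega
    rcases pick_main S hd hε hε' hδ (cls S hd hε hε' hδ t) (whs S hd hε hε' hδ t)
      (j := k - t.length) hne1 with hkill | hsplit
    · -- kill branch
      have hcount := Finset.card_le_card (err_sub S hd hε hε' hδ t hlt)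
      have h5 : (cls S hd hε hε' hδ (k := k) t).card ≤ 5 *
          ((cls S hd hε hε' hδ t).filter (fun Z =>
            ∃ p ∈ (run (myOwner S hd hε hε' hδ) S Z k).drop t.length,
              ∃ jj : Fin d, |p.1 jj - p.2.2 jj| > ε')).card := le_trans hkill (by omega)
      refine le_trans (min_le_left _ _) ?_
      have hreal := (Nat.cast_le (α := ℝ)).2 h5
      push_cast at hreal
      linarith
    · -- split branch
      have hfib : ∀ v : Fin d → ℝ, cls S hd hε hε' hδ (k := k) (v :: t) =
          (cls S hd hε hε' hδ t).filter (fun Z => rsp S hd hε hε' hδ t Z = v) :=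
        fun v => cls_cons S hd hε hε' hδ v t
      have hsum : ∑ v ∈ (cls S hd hε hε' hδ t).image (rsp S hd hε hε' hδ t),
          (cls S hd hε hε' hδ (k := k) (v :: t)).card = (cls S hd hε hε' hδ t).card := by
        simp only [hfib]
        exact (Finset.card_eq_sum_card_fiberwise
          (fun Z hZ => Finset.mem_image_of_mem _ hZ)).symm
      set F : (Fin d → ℝ) → Finset (Fin m → Bool) := fun v =>
        (cls S hd hε hε' hδ (v :: t)).filter (fun Z =>
          ∃ p ∈ (run (myOwner S hd hε hε' hδ) S Z k).drop (v :: t).length,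
            ∃ jj : Fin d, |p.1 jj - p.2.2 jj| > ε') with hF
      have hdisj : ∀ v1 ∈ (cls S hd hε hε' hδ t).image (rsp S hd hε hε' hδ t),
          ∀ v2 ∈ (cls S hd hε hε' hδ t).image (rsp S hd hε hε' hδ t),
          v1 ≠ v2 → Disjoint (F v1) (F v2) := by
        intro v1 _ v2 _ hne
        rw [Finset.disjoint_left]
        intro Z h1 h2
        have e1 : rsp S hd hε hε' hδ t Z = v1 := by
          have := (Finset.mem_filter.1 h1).1
          rw [hfib v1, Finset.mem_filter] at this
          exact this.2
        have e2 : rsp S hd hε hε' hδ t Z = v2 := by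
          have := (Finset.mem_filter.1 h2).1
          rw [hfib v2, Finset.mem_filter] at this
          exact this.2
        exact hne (e1 ▸ e2 ▸ rfl)
      have hBsub : ((cls S hd hε hε' hδ t).image (rsp S hd hε hε' hδ t)).biUnion F ⊆
          (cls S hd hε hε' hδ t).filter (fun Z =>
            ∃ p ∈ (run (myOwner S hd hε hε' hδ) S Z k).drop t.length,
              ∃ jj : Fin d, |p.1 jj - p.2.2 jj| > ε') := by
        intro Z hZ
        rw [Finset.mem_biUnion] at hZ
        obtain ⟨v, _, hZv⟩ := hZ
        rw [Finset.mem_filter] at hZv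
        obtain ⟨hZc, p, hp, hperr⟩ := hZv
        have hZC : Z ∈ cls S hd hε hε' hδ (k := k) t := by
          rw [hfib v, Finset.mem_filter] at hZc
          exact hZc.1
        rw [Finset.mem_filter]
        refine ⟨hZC, p, ?_, hperr⟩
        have hp' : p ∈ ((run (myOwner S hd hε hε' hδ) S Z k).drop t.length).drop 1 := by
          rw [List.drop_drop]
          simpa using hp
        exact List.mem_of_mem_drop hp'
      have hECsum : ∑ v ∈ (cls S hd hε hε' hδ t).image (rsp S hd hε hε' hδ t), (F v).card ≤
          ((cls S hd hε hε' hδ t).filter (fun Z =>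
            ∃ p ∈ (run (myOwner S hd hε hε' hδ) S Z k).drop t.length,
              ∃ jj : Fin d, |p.1 jj - p.2.2 jj| > ε')).card := by
        rw [← Finset.card_biUnion hdisj]
        exact Finset.card_le_card hBsub
      have hcomb := combine ((cls S hd hε hε' hδ t).image (rsp S hd hε hε' hδ t))
        (fun v => ((cls S hd hε hε' hδ (k := k) (v :: t)).card : ℝ))
        (fun v => ((F v).card : ℝ))
        ((cls S hd hε hε' hδ (k := k) t).card : ℝ)
        (((cls S hd hε hε' hδ t).filter (fun Z =>
            ∃ p ∈ (run (myOwner S hd hε hε' hδ) S Z k).drop t.length,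
              ∃ jj : Fin d, |p.1 jj - p.2.2 jj| > ε')).card : ℝ)
        ((⌊δ * 2 ^ n⌋₊ : ℝ) * (5 / 4) ^ (j - 1))
        (by positivity) (by positivity)
        (fun v _ => by positivity) (fun v _ => by positivity)
        (by exact_mod_cast hsum) (by exact_mod_cast hECsum)
        (fun v _ => by
          show 5 * ((cls S hd hε hε' hδ (k := k) (v :: t)).card : ℝ) ≤
            4 * ((cls S hd hε hε' hδ (k := k) t).card : ℝ)
          have h := hsplit v
          have e : (cls S hd hε hε' hδ (k := k) (v :: t)) =
              (cls S hd hε hε' hδ t).filter (fun Z =>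
                S.r Z (whs S hd hε hε' hδ t Z)
                  ((pick S hd hε hε' hδ (cls S hd hε hε' hδ t) (whs S hd hε hε' hδ t)
                    (k - t.length)).1 (S.q Z (whs S hd hε hε' hδ t Z))) = v) := rfl
          rw [e]
          exact_mod_cast h)
        (fun v _ => ih (v :: t) (by simp only [List.length_cons]; omega))
      have hpow : ((⌊δ * 2 ^ n⌋₊ : ℝ)) * (5 / 4) ^ ((j + 1) - 1) =
          5 / 4 * ((⌊δ * 2 ^ n⌋₊ : ℝ) * (5 / 4) ^ (j - 1)) := by
        have h1 : (5 / 4 : ℝ) ^ j = 5 / 4 * (5 / 4) ^ (j - 1) := by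
          conv_lhs => rw [show j = (j - 1) + 1 by omega]
          rw [pow_succ]; ring
        simp only [Nat.add_sub_cancel]
        rw [h1]; ring
      rw [hpow]
      exact hcomb

end main

end SLB

theorem steward_lower_bound (n k d m : ℕ) (hn : 0 < n) (hk : 0 < k) (hd : 0 < d)
    (ε ε' δ δ' : ℝ) (hε : 0 < ε) (hε' : 0 < ε')
    (hδ : ((2 : ℝ) ^ n)⁻¹ ≤ δ) (hδ'0 : 0 < δ') (hδ'1 : δ' < 0.2)
    (S : Steward n k d m) (hS : IsSteward n k d m ε δ ε' δ' S) :
    ((n : ℝ) - 2) + ((k : ℝ) - 1) * Real.logb 2 (5 / 4) - Real.logb 2 (δ' / δ) ≤ m := by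
  have h2n : (0:ℝ) < 2 ^ n := by positivity
  have h2m : (0:ℝ) < 2 ^ m := by positivity
  have hδ1 : 1 ≤ δ * 2 ^ n := by
    have h := mul_le_mul_of_nonneg_right hδ (le_of_lt h2n)
    rwa [inv_mul_cancel₀ (ne_of_gt h2n)] at h
  have hδ0 : 0 < δ := by nlinarith
  have hδ'5 : δ' < 1 / 5 := by norm_num at hδ'1 ⊢; linarith
  have hpr := hS (SLB.myOwner S hd hε hε' hδ1)
  have hg := SLB.grand S hd hε hε' hδ1 k hk [] (by simp)
  have hcls : SLB.cls S hd hε hε' hδ1 (k := k) ([] : List (Fin d → ℝ)) =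
      (Finset.univ : Finset (Fin m → Bool)) := rfl
  rw [hcls] at hg
  have hfeq : (Finset.univ : Finset (Fin m → Bool)).filter (fun Z =>
      ∃ p ∈ (run (SLB.myOwner S hd hε hε' hδ1) S Z k).drop
          (List.length ([] : List (Fin d → ℝ))),
        ∃ jj : Fin d, |p.1 jj - p.2.2 jj| > ε') =
      Finset.univ.filter (fun Z => ∃ p ∈ run (SLB.myOwner S hd hε hε' hδ1) S Z k,
        ∃ jj : Fin d, |p.1 jj - p.2.2 jj| > ε') := by
    apply Finset.filter_congr
    intro Z _
    simp only [List.length_nil, List.drop_zero]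
  rw [hfeq] at hg
  have hcardZ : ((Fintype.card (Fin m → Bool)) : ℝ) = 2 ^ m := by
    rw [SLB.card_bool_fun]
    push_cast
    ring
  have hcardU : (((Finset.univ : Finset (Fin m → Bool)).card) : ℝ) = 2 ^ m := by
    rw [Finset.card_univ]
    exact hcardZ
  rw [hcardU] at hg
  have hEle : ∀ i : DecidablePred (fun Z : Fin m → Bool =>
      ∃ p ∈ run (SLB.myOwner S hd hε hε' hδ1) S Z k,
        ∃ jj : Fin d, |p.1 jj - p.2.2 jj| > ε'),
      ((@Finset.filter _ (fun Z : Fin m → Bool =>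
        ∃ p ∈ run (SLB.myOwner S hd hε hε' hδ1) S Z k,
          ∃ jj : Fin d, |p.1 jj - p.2.2 jj| > ε') i Finset.univ).card : ℝ) ≤ δ' * 2 ^ m := by
    intro i
    rw [SLB.card_pr_eq _ i]
    have h2 : ((Fintype.card (Fin m → Bool) : ℕ) : ℝ) = 2 ^ m := hcardZ
    rw [h2]
    exact mul_le_mul_of_nonneg_right hpr (le_of_lt h2m)
  have hkey : ((⌊δ * 2 ^ n⌋₊ : ℕ) : ℝ) * (5 / 4) ^ (k - 1) ≤ δ' * 2 ^ m := by
    rcases le_or_gt ((2:ℝ) ^ m / 5) (((⌊δ * 2 ^ n⌋₊ : ℕ) : ℝ) * (5 / 4) ^ (k - 1)) with hc | hc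
    · exfalso
      rw [min_eq_left hc] at hg
      have h1 := le_trans hg (hEle _)
      have h2 := mul_lt_mul_of_pos_right hδ'5 h2m
      linarith
    · rw [min_eq_right (le_of_lt hc)] at hg
      exact le_trans hg (hEle _)
  have hs1 : (1:ℝ) ≤ ((⌊δ * 2 ^ n⌋₊ : ℕ) : ℝ) := by
    have h := Nat.le_floor (α := ℝ) (n := 1) (by exact_mod_cast hδ1)
    exact_mod_cast h
  have hs2 : δ * 2 ^ n < ((⌊δ * 2 ^ n⌋₊ : ℕ) : ℝ) + 1 := Nat.lt_floor_add_one _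
  have hs3 : δ * 2 ^ n ≤ 2 * ((⌊δ * 2 ^ n⌋₊ : ℕ) : ℝ) := by linarith
  have hp : (0:ℝ) < (5 / 4) ^ (k - 1) := by positivity
  have hfin : δ * 2 ^ n * (5 / 4) ^ (k - 1) ≤ 2 * (δ' * 2 ^ m) := by
    calc δ * 2 ^ n * (5 / 4) ^ (k - 1)
        ≤ 2 * ((⌊δ * 2 ^ n⌋₊ : ℕ) : ℝ) * (5 / 4) ^ (k - 1) :=
          mul_le_mul_of_nonneg_right hs3 (le_of_lt hp)
      _ = 2 * (((⌊δ * 2 ^ n⌋₊ : ℕ) : ℝ) * (5 / 4) ^ (k - 1)) := by ring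
      _ ≤ 2 * (δ' * 2 ^ m) := by linarith
  have hx : δ * 2 ^ n * (5 / 4) ^ (k - 1) / (2 * δ') ≤ 2 ^ m := by
    rw [div_le_iff₀ (by positivity)]
    nlinarith
  have hx0 : (0:ℝ) < δ * 2 ^ n * (5 / 4) ^ (k - 1) / (2 * δ') := by positivity
  have hlb := Real.logb_le_logb_of_le (b := 2) (by norm_num) hx0 hx
  have hm : Real.logb 2 ((2:ℝ) ^ m) = m := by
    rw [Real.logb_pow, Real.logb_self_eq_one (by norm_num)]
    ring
  have hn' : Real.logb 2 ((2:ℝ) ^ n) = n := by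
    rw [Real.logb_pow, Real.logb_self_eq_one (by norm_num)]
    ring
  have hk1 : 1 ≤ k := hk
  have hkL : Real.logb 2 (((5:ℝ) / 4) ^ (k - 1)) = ((k:ℝ) - 1) * Real.logb 2 (5 / 4) := by
    rw [Real.logb_pow]
    congr 1
    rw [Nat.cast_sub hk1, Nat.cast_one]
  have hexp : Real.logb 2 (δ * 2 ^ n * (5 / 4) ^ (k - 1) / (2 * δ')) =
      Real.logb 2 δ + (n:ℝ) + ((k:ℝ) - 1) * Real.logb 2 (5 / 4)
        - (1 + Real.logb 2 δ') := by
    rw [Real.logb_div (by positivity) (by positivity),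
      Real.logb_mul (by positivity) (ne_of_gt hp),
      Real.logb_mul (ne_of_gt hδ0) (ne_of_gt h2n),
      Real.logb_mul (by norm_num) (ne_of_gt hδ'0),
      hn', hkL, Real.logb_self_eq_one (by norm_num)]
  rw [hexp, hm] at hlb
  rw [Real.logb_div (ne_of_gt hδ'0) (ne_of_gt hδ0)]
  linarith
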